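/- Let δ, δ' ≥ 2 be real numbers and let π(x) = x^{δ'/2−1}(1−x)^{δ/2−1}/B(δ'/2, δ/2) for x ∈ (0,1). Let p : (0,1) × (0,1) → [0,∞) be jointly measurable with ∫_0^1 p(x,y) dy = 1 for every x ∈ (0,1) and π(x) p(x,y) = π(y) p(y,x) for all x, y ∈ (0,1). Fix (n,q) ∈ ℕ×ℕ, a finite set Λ ⊂ ℕ×ℕ and nonnegative constants (B_{i,j})_{(i,j)∈Λ} such that for all x ∈ (0,1): ∫_0^1 y^n (1−y)^q p(x,y) dy = Σ_{(i,j)∈Λ} B_{i,j} x^i (1−x)^j. Then the probability measure ν_{n,q}P defined by A ↦ ∫_{(0,1)} (∫_A p(x,y) dy) dν_{n,q}(x) equals Σ_{(i,j)∈Λ} α_{i,j} ν_{i,j}, where α_{i,j} = B_{i,j} · B(i+δ'/2, j+δ/2) / B(n+δ'/2, q+δ/2); moreover the α_{i,j} are nonnegative and Σ_{(i,j)∈Λ} α_{i,j} = 1. -/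

import Mathlib

open Finset Real MeasureTheory
open scoped ENNReal NNReal

/-- Euler Beta function `B(a,b) = Γ(a)Γ(b)/Γ(a+b)`. -/
noncomputable def Beta (a b : ℝ) : ℝ := Real.Gamma a * Real.Gamma b / Real.Gamma (a + b)

/-- `nu δ δ' i j` is the Beta distribution on `(0,1)` with parameters `(i + δ'/2, j + δ/2)`. -/
noncomputable def nu (δ δ' : ℝ) (i j : ℕ) : Measure ℝ :=
  (volume.restrict (Set.Ioo (0 : ℝ) 1)).withDensity
    (fun x => ENNReal.ofReal
      (x ^ ((i : ℝ) + δ' / 2 - 1) * (1 - x) ^ ((j : ℝ) + δ / 2 - 1) /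
        Beta ((i : ℝ) + δ' / 2) ((j : ℝ) + δ / 2)))

set_option linter.unusedSectionVars false

lemma Beta_pos' {a b : ℝ} (ha : 0 < a) (hb : 0 < b) : 0 < Beta a b :=
  div_pos (mul_pos (Real.Gamma_pos_of_pos ha) (Real.Gamma_pos_of_pos hb))
    (Real.Gamma_pos_of_pos (add_pos ha hb))

lemma integral_beta' {a b : ℝ} (ha : 0 < a) (hb : 0 < b) :
    ∫ x in Set.Ioo (0:ℝ) 1, x ^ (a-1) * (1-x) ^ (b-1) = Beta a b := by
  have key := Complex.Gamma_mul_Gamma_eq_betaIntegral (s := (a:ℂ)) (t := (b:ℂ))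
    (by simpa using ha) (by simpa using hb)
  have hβ : Complex.betaIntegral (a:ℂ) (b:ℂ)
      = ((∫ x in (0:ℝ)..1, x ^ (a-1) * (1-x) ^ (b-1) : ℝ) : ℂ) := by
    rw [Complex.betaIntegral, ← intervalIntegral.integral_ofReal]
    refine intervalIntegral.integral_congr fun x hx => ?_
    rw [Set.uIcc_of_le (by norm_num : (0:ℝ) ≤ 1)] at hx
    have hx0 : 0 ≤ x := hx.1
    have hx1 : 0 ≤ 1 - x := by linarith [hx.2]
    rw [show ((a:ℂ)-1) = ((a-1:ℝ):ℂ) by push_cast; ring,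
      show ((b:ℂ)-1) = ((b-1:ℝ):ℂ) by push_cast; ring,
      show (1 - (x:ℂ)) = ((1-x:ℝ):ℂ) by push_cast; ring,
      ← Complex.ofReal_cpow hx0, ← Complex.ofReal_cpow hx1, ← Complex.ofReal_mul]
  rw [hβ, ← Complex.ofReal_add, Complex.Gamma_ofReal, Complex.Gamma_ofReal,
    Complex.Gamma_ofReal, ← Complex.ofReal_mul, ← Complex.ofReal_mul] at key
  have key' : Real.Gamma a * Real.Gamma b
      = Real.Gamma (a + b) * ∫ x in (0:ℝ)..1, x ^ (a-1) * (1-x) ^ (b-1) :=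
    Complex.ofReal_injective key
  have hG : Real.Gamma (a + b) ≠ 0 := (Real.Gamma_pos_of_pos (add_pos ha hb)).ne'
  have : ∫ x in (0:ℝ)..1, x ^ (a-1) * (1-x) ^ (b-1) = Beta a b := by
    rw [Beta, key', mul_comm, mul_div_assoc, div_self hG, mul_one]
  rw [← this, intervalIntegral.integral_of_le (by norm_num : (0:ℝ) ≤ 1),
    ← integral_Ioc_eq_integral_Ioo]

lemma lintegral_beta' {a b : ℝ} (ha : 1 ≤ a) (hb : 1 ≤ b) :
    ∫⁻ x in Set.Ioo (0:ℝ) 1, ENNReal.ofReal (x ^ (a-1) * (1-x) ^ (b-1))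
      = ENNReal.ofReal (Beta a b) := by
  have ha0 : (0:ℝ) < a := lt_of_lt_of_le one_pos ha
  have hb0 : (0:ℝ) < b := lt_of_lt_of_le one_pos hb
  have hmeas : Measurable (fun x : ℝ => x ^ (a-1) * (1-x) ^ (b-1)) := by fun_prop
  have hint : IntegrableOn (fun x : ℝ => x ^ (a-1) * (1-x) ^ (b-1)) (Set.Ioo 0 1) := by
    refine Integrable.mono' (integrable_const (1:ℝ)) hmeas.aestronglyMeasurable ?_
    filter_upwards [ae_restrict_mem measurableSet_Ioo] with x hx
    have hx0 : (0:ℝ) ≤ x := hx.1.le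
    have hx1 : (0:ℝ) ≤ 1 - x := by linarith [hx.2]
    rw [Real.norm_eq_abs, abs_of_nonneg (mul_nonneg (Real.rpow_nonneg hx0 _)
      (Real.rpow_nonneg hx1 _))]
    calc x ^ (a-1) * (1-x) ^ (b-1) ≤ 1 * 1 := by
          refine mul_le_mul ?_ ?_ (Real.rpow_nonneg hx1 _) one_pos.le
          · exact Real.rpow_le_one hx0 hx.2.le (by linarith)
          · exact Real.rpow_le_one hx1 (by linarith [hx.1]) (by linarith)
      _ = 1 := one_mul 1
  have hnn : 0 ≤ᵐ[volume.restrict (Set.Ioo (0:ℝ) 1)]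
      fun x : ℝ => x ^ (a-1) * (1-x) ^ (b-1) := by
    filter_upwards [ae_restrict_mem measurableSet_Ioo] with x hx
    exact mul_nonneg (Real.rpow_nonneg hx.1.le _) (Real.rpow_nonneg (by linarith [hx.2]) _)
  rw [← MeasureTheory.ofReal_integral_eq_lintegral_ofReal hint hnn, integral_beta' ha0 hb0]

section Main

variable {δ δ' : ℝ} (hδ : 2 ≤ δ) (hδ' : 2 ≤ δ')

noncomputable def dd (δ δ' : ℝ) (i j : ℕ) (x : ℝ) : ℝ :=
  x ^ ((i : ℝ) + δ' / 2 - 1) * (1 - x) ^ ((j : ℝ) + δ / 2 - 1)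

noncomputable def cc (δ δ' : ℝ) (i j : ℕ) : ℝ :=
  Beta ((i : ℝ) + δ' / 2) ((j : ℝ) + δ / 2)

lemma nu_eq (δ δ' : ℝ) (i j : ℕ) : nu δ δ' i j
    = (volume.restrict (Set.Ioo (0 : ℝ) 1)).withDensity
      (fun x => ENNReal.ofReal (dd δ δ' i j x / cc δ δ' i j)) := rfl

lemma dd_meas (δ δ' : ℝ) (i j : ℕ) : Measurable (dd δ δ' i j) := by
  unfold dd; fun_prop

include hδ hδ'

lemma one_le_p1 (i : ℕ) : (1:ℝ) ≤ (i : ℝ) + δ' / 2 := by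
  have : (0:ℝ) ≤ (i:ℝ) := Nat.cast_nonneg i
  linarith

lemma one_le_p2 (j : ℕ) : (1:ℝ) ≤ (j : ℝ) + δ / 2 := by
  have : (0:ℝ) ≤ (j:ℝ) := Nat.cast_nonneg j
  linarith

lemma cc_pos (i j : ℕ) : 0 < cc δ δ' i j :=
  Beta_pos' (lt_of_lt_of_le one_pos (one_le_p1 hδ hδ' i))
    (lt_of_lt_of_le one_pos (one_le_p2 hδ hδ' j))

lemma lintegral_dd (i j : ℕ) :
    ∫⁻ x in Set.Ioo (0:ℝ) 1, ENNReal.ofReal (dd δ δ' i j x)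
      = ENNReal.ofReal (cc δ δ' i j) :=
  lintegral_beta' (one_le_p1 hδ hδ' i) (one_le_p2 hδ hδ' j)

lemma dd_nonneg {x : ℝ} (hx : x ∈ Set.Ioo (0:ℝ) 1) (i j : ℕ) : 0 ≤ dd δ δ' i j x :=
  mul_nonneg (Real.rpow_nonneg hx.1.le _) (Real.rpow_nonneg (by linarith [hx.2] : (0:ℝ) ≤ 1 - x) _)

lemma dd_split {x : ℝ} (hx : x ∈ Set.Ioo (0:ℝ) 1) (i j : ℕ) :
    dd δ δ' i j x = x ^ i * (1-x) ^ j * (x ^ (δ'/2-1) * (1-x) ^ (δ/2-1)) := by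
  have hx0 : 0 < x := hx.1
  have hx1 : 0 < 1 - x := by linarith [hx.2]
  rw [dd, show (i:ℝ) + δ'/2 - 1 = (i:ℝ) + (δ'/2-1) by ring,
    show (j:ℝ) + δ/2 - 1 = (j:ℝ) + (δ/2-1) by ring,
    Real.rpow_add hx0, Real.rpow_add hx1, Real.rpow_natCast, Real.rpow_natCast]
  ring

lemma htot (i j : ℕ) :
    ∫⁻ x in Set.Ioo (0:ℝ) 1, ENNReal.ofReal (dd δ δ' i j x / cc δ δ' i j) = 1 := by
  have hcp := cc_pos hδ hδ' i j
  have : ∀ x ∈ Set.Ioo (0:ℝ) 1, ENNReal.ofReal (dd δ δ' i j x / cc δ δ' i j)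
      = ENNReal.ofReal (dd δ δ' i j x) * ENNReal.ofReal (cc δ δ' i j)⁻¹ := by
    intro x hx
    rw [div_eq_mul_inv, ENNReal.ofReal_mul (dd_nonneg hδ hδ' hx i j)]
  rw [setLIntegral_congr_fun measurableSet_Ioo this,
    lintegral_mul_const _ ((dd_meas δ δ' i j).ennreal_ofReal),
    lintegral_dd hδ hδ', ← ENNReal.ofReal_mul hcp.le, mul_inv_cancel₀ hcp.ne',
    ENNReal.ofReal_one]

lemma nu_apply {A : Set ℝ} (hA : MeasurableSet A) (hAs : A ⊆ Set.Ioo (0:ℝ) 1) (i j : ℕ) :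
    nu δ δ' i j A = ∫⁻ x in A, ENNReal.ofReal (dd δ δ' i j x / cc δ δ' i j) := by
  rw [nu_eq, withDensity_apply _ hA, Measure.restrict_restrict hA,
    Set.inter_eq_self_of_subset_left hAs]

lemma nu_total (i j : ℕ) : nu δ δ' i j (Set.Ioo (0:ℝ) 1) = 1 := by
  rw [nu_apply hδ hδ' measurableSet_Ioo (subset_refl _), htot hδ hδ']

end Main

section Main2

variable {δ δ' : ℝ} (hδ : 2 ≤ δ) (hδ' : 2 ≤ δ')

include hδ hδ' in
lemma part1_aux (p : ℝ × ℝ → ℝ≥0) (hp : Measurable p)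
    (hrev : ∀ x ∈ Set.Ioo (0 : ℝ) 1, ∀ y ∈ Set.Ioo (0 : ℝ) 1,
      (x ^ (δ' / 2 - 1) * (1 - x) ^ (δ / 2 - 1) / Beta (δ' / 2) (δ / 2)) * (p (x, y) : ℝ)
        = (y ^ (δ' / 2 - 1) * (1 - y) ^ (δ / 2 - 1) / Beta (δ' / 2) (δ / 2)) * (p (y, x) : ℝ))
    (n q : ℕ) (Λ : Finset (ℕ × ℕ)) (B : ℕ × ℕ → ℝ) (hB : ∀ ij ∈ Λ, 0 ≤ B ij)
    (hexp : ∀ x ∈ Set.Ioo (0 : ℝ) 1,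
      ∫⁻ y in Set.Ioo (0 : ℝ) 1, ENNReal.ofReal (y ^ n * (1 - y) ^ q) * (p (x, y) : ℝ≥0∞)
        = ENNReal.ofReal (∑ ij ∈ Λ, B ij * x ^ ij.1 * (1 - x) ^ ij.2))
    {A : Set ℝ} (hA : MeasurableSet A) (hAs : A ⊆ Set.Ioo (0 : ℝ) 1) :
    ∫⁻ x, (∫⁻ y in A, (p (x, y) : ℝ≥0∞)) ∂(nu δ δ' n q)
      = ∑ ij ∈ Λ, ENNReal.ofReal (B ij * cc δ δ' ij.1 ij.2 / cc δ δ' n q)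
          * nu δ δ' ij.1 ij.2 A := by
  have hB0 : (0:ℝ) < Beta (δ'/2) (δ/2) :=
    Beta_pos' (by linarith) (by linarith)
  have hcnq := cc_pos hδ hδ' n q
  set B0 := Beta (δ'/2) (δ/2) with hB0def
  have hpm : Measurable fun z : ℝ × ℝ => (p z : ℝ≥0∞) :=
    measurable_coe_nnreal_ennreal.comp hp
  have hf : Measurable fun x : ℝ => ENNReal.ofReal (dd δ δ' n q x / cc δ δ' n q) :=
    ((dd_meas δ δ' n q).div_const _).ennreal_ofReal
  have hG : Measurable fun x : ℝ => ∫⁻ y in A, (p (x, y) : ℝ≥0∞) :=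
    Measurable.lintegral_prod_right' hpm
  rw [nu_eq, lintegral_withDensity_eq_lintegral_mul _ hf hG]
  simp only [Pi.mul_apply]
  have step1 : ∀ x : ℝ, ENNReal.ofReal (dd δ δ' n q x / cc δ δ' n q)
        * ∫⁻ y in A, (p (x, y) : ℝ≥0∞)
      = ∫⁻ y in A, ENNReal.ofReal (dd δ δ' n q x / cc δ δ' n q) * (p (x, y) : ℝ≥0∞) := by
    intro x
    exact (lintegral_const_mul _ (hpm.comp measurable_prodMk_left)).symm
  rw [lintegral_congr step1]
  have hFmeas : Measurable fun z : ℝ × ℝ =>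
      ENNReal.ofReal (dd δ δ' n q z.1 / cc δ δ' n q) * (p z : ℝ≥0∞) :=
    ((((dd_meas δ δ' n q).comp measurable_fst).div_const _).ennreal_ofReal).mul hpm
  rw [lintegral_lintegral_swap hFmeas.aemeasurable]
  -- inner evaluation
  have hinner : ∀ y ∈ Set.Ioo (0:ℝ) 1,
      ∫⁻ x in Set.Ioo (0:ℝ) 1,
          ENNReal.ofReal (dd δ δ' n q x / cc δ δ' n q) * (p (x, y) : ℝ≥0∞)
        = ENNReal.ofReal ((B0 / cc δ δ' n q) * ((y ^ (δ'/2-1) * (1-y) ^ (δ/2-1)) / B0)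
            * (∑ ij ∈ Λ, B ij * y ^ ij.1 * (1 - y) ^ ij.2)) := by
    intro y hy
    have hπy : (0:ℝ) ≤ y ^ (δ'/2-1) * (1-y) ^ (δ/2-1) / B0 := by
      have h1 : (0:ℝ) ≤ y ^ (δ'/2-1) := Real.rpow_nonneg hy.1.le _
      have h2 : (0:ℝ) ≤ (1-y) ^ (δ/2-1) := Real.rpow_nonneg (by linarith [hy.2]) _
      positivity
    have hptw : ∀ x ∈ Set.Ioo (0:ℝ) 1,
        ENNReal.ofReal (dd δ δ' n q x / cc δ δ' n q) * (p (x, y) : ℝ≥0∞)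
          = (ENNReal.ofReal (B0 / cc δ δ' n q)
              * ENNReal.ofReal ((y ^ (δ'/2-1) * (1-y) ^ (δ/2-1)) / B0))
            * (ENNReal.ofReal (x ^ n * (1 - x) ^ q) * (p (y, x) : ℝ≥0∞)) := by
      intro x hx
      have hx1 : (0:ℝ) ≤ 1 - x := by linarith [hx.2]
      have hxq : (0:ℝ) ≤ x ^ n * (1-x) ^ q :=
        mul_nonneg (pow_nonneg hx.1.le n) (pow_nonneg hx1 q)
      have hπx : (0:ℝ) ≤ x ^ (δ'/2-1) * (1-x) ^ (δ/2-1) / B0 := by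
        have h1 : (0:ℝ) ≤ x ^ (δ'/2-1) := Real.rpow_nonneg hx.1.le _
        have h2 : (0:ℝ) ≤ (1-x) ^ (δ/2-1) := Real.rpow_nonneg hx1 _
        positivity
      have h1 : dd δ δ' n q x / cc δ δ' n q
          = (B0 / cc δ δ' n q) * ((x ^ n * (1-x) ^ q)
              * ((x ^ (δ'/2-1) * (1-x) ^ (δ/2-1)) / B0)) := by
        rw [dd_split hδ hδ' hx]
        field_simp
      have h2 : ENNReal.ofReal ((x ^ (δ'/2-1) * (1-x) ^ (δ/2-1)) / B0) * (p (x, y) : ℝ≥0∞)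
          = ENNReal.ofReal ((y ^ (δ'/2-1) * (1-y) ^ (δ/2-1)) / B0) * (p (y, x) : ℝ≥0∞) := by
        rw [← ENNReal.ofReal_coe_nnreal, ← ENNReal.ofReal_mul hπx,
          hrev x hx y hy, ENNReal.ofReal_mul hπy, ENNReal.ofReal_coe_nnreal]
      calc ENNReal.ofReal (dd δ δ' n q x / cc δ δ' n q) * (p (x, y) : ℝ≥0∞)
          = ENNReal.ofReal (B0 / cc δ δ' n q) * ENNReal.ofReal (x ^ n * (1-x) ^ q)
            * (ENNReal.ofReal ((x ^ (δ'/2-1) * (1-x) ^ (δ/2-1)) / B0) * (p (x, y) : ℝ≥0∞)) := by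
            rw [h1, ENNReal.ofReal_mul (div_nonneg hB0.le hcnq.le), ENNReal.ofReal_mul hxq]
            ring
        _ = ENNReal.ofReal (B0 / cc δ δ' n q) * ENNReal.ofReal (x ^ n * (1-x) ^ q)
            * (ENNReal.ofReal ((y ^ (δ'/2-1) * (1-y) ^ (δ/2-1)) / B0) * (p (y, x) : ℝ≥0∞)) := by
            rw [h2]
        _ = _ := by ring
    rw [setLIntegral_congr_fun measurableSet_Ioo hptw,
      lintegral_const_mul _ (by fun_prop : Measurable fun x : ℝ =>
        ENNReal.ofReal (x ^ n * (1 - x) ^ q) * (p (y, x) : ℝ≥0∞)),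
      hexp y hy, ← ENNReal.ofReal_mul (div_nonneg hB0.le hcnq.le),
      ← ENNReal.ofReal_mul (mul_nonneg (div_nonneg hB0.le hcnq.le) hπy)]
  -- expand inner into the sum, pointwise on A
  have hsum : ∀ y ∈ Set.Ioo (0:ℝ) 1,
      ENNReal.ofReal ((B0 / cc δ δ' n q) * ((y ^ (δ'/2-1) * (1-y) ^ (δ/2-1)) / B0)
          * (∑ ij ∈ Λ, B ij * y ^ ij.1 * (1 - y) ^ ij.2))
        = ∑ ij ∈ Λ, ENNReal.ofReal (B ij * cc δ δ' ij.1 ij.2 / cc δ δ' n q)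
            * ENNReal.ofReal (dd δ δ' ij.1 ij.2 y / cc δ δ' ij.1 ij.2) := by
    intro y hy
    have hre : (B0 / cc δ δ' n q) * ((y ^ (δ'/2-1) * (1-y) ^ (δ/2-1)) / B0)
          * (∑ ij ∈ Λ, B ij * y ^ ij.1 * (1 - y) ^ ij.2)
        = ∑ ij ∈ Λ, (B ij * cc δ δ' ij.1 ij.2 / cc δ δ' n q)
            * (dd δ δ' ij.1 ij.2 y / cc δ δ' ij.1 ij.2) := by
      rw [Finset.mul_sum]
      refine Finset.sum_congr rfl fun ij _ => ?_
      have hcij := cc_pos hδ hδ' ij.1 ij.2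
      rw [dd_split hδ hδ' hy]
      field_simp
    rw [hre, ENNReal.ofReal_sum_of_nonneg, ]
    · refine Finset.sum_congr rfl fun ij hij => ?_
      have hcij := cc_pos hδ hδ' ij.1 ij.2
      exact ENNReal.ofReal_mul (div_nonneg (mul_nonneg (hB ij hij) hcij.le) hcnq.le)
    · intro ij hij
      have hcij := cc_pos hδ hδ' ij.1 ij.2
      exact mul_nonneg (div_nonneg (mul_nonneg (hB ij hij) hcij.le) hcnq.le)
        (div_nonneg (dd_nonneg hδ hδ' hy ij.1 ij.2) hcij.le)
  have hAcong : ∀ y ∈ A,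
      (∫⁻ x in Set.Ioo (0:ℝ) 1,
          ENNReal.ofReal (dd δ δ' n q x / cc δ δ' n q) * (p (x, y) : ℝ≥0∞))
        = ∑ ij ∈ Λ, ENNReal.ofReal (B ij * cc δ δ' ij.1 ij.2 / cc δ δ' n q)
            * ENNReal.ofReal (dd δ δ' ij.1 ij.2 y / cc δ δ' ij.1 ij.2) := by
    intro y hy
    rw [hinner y (hAs hy), hsum y (hAs hy)]
  rw [setLIntegral_congr_fun hA hAcong,
    lintegral_finset_sum _ (fun ij _ => ((((dd_meas δ δ' ij.1 ij.2).div_const _).ennreal_ofReal).const_mul _))]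
  refine Finset.sum_congr rfl fun ij hij => ?_
  rw [lintegral_const_mul _ (((dd_meas δ δ' ij.1 ij.2).div_const _).ennreal_ofReal),
    nu_apply hδ hδ' hA hAs]

end Main2

theorem stmt14 (δ δ' : ℝ) (hδ : 2 ≤ δ) (hδ' : 2 ≤ δ')
    (p : ℝ × ℝ → ℝ≥0) (hp : Measurable p)
    (hmarg : ∀ x ∈ Set.Ioo (0 : ℝ) 1, ∫⁻ y in Set.Ioo (0 : ℝ) 1, (p (x, y) : ℝ≥0∞) = 1)
    (hrev : ∀ x ∈ Set.Ioo (0 : ℝ) 1, ∀ y ∈ Set.Ioo (0 : ℝ) 1,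
      (x ^ (δ' / 2 - 1) * (1 - x) ^ (δ / 2 - 1) / Beta (δ' / 2) (δ / 2)) * (p (x, y) : ℝ)
        = (y ^ (δ' / 2 - 1) * (1 - y) ^ (δ / 2 - 1) / Beta (δ' / 2) (δ / 2)) * (p (y, x) : ℝ))
    (n q : ℕ) (Λ : Finset (ℕ × ℕ)) (B : ℕ × ℕ → ℝ) (hB : ∀ ij ∈ Λ, 0 ≤ B ij)
    (hexp : ∀ x ∈ Set.Ioo (0 : ℝ) 1,
      ∫⁻ y in Set.Ioo (0 : ℝ) 1, ENNReal.ofReal (y ^ n * (1 - y) ^ q) * (p (x, y) : ℝ≥0∞)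
        = ENNReal.ofReal (∑ ij ∈ Λ, B ij * x ^ ij.1 * (1 - x) ^ ij.2)) :
    (∀ A : Set ℝ, MeasurableSet A → A ⊆ Set.Ioo (0 : ℝ) 1 →
      ∫⁻ x, (∫⁻ y in A, (p (x, y) : ℝ≥0∞)) ∂(nu δ δ' n q)
        = ∑ ij ∈ Λ,
            ENNReal.ofReal (B ij * Beta ((ij.1 : ℝ) + δ' / 2) ((ij.2 : ℝ) + δ / 2) /
                Beta ((n : ℝ) + δ' / 2) ((q : ℝ) + δ / 2)) *
              nu δ δ' ij.1 ij.2 A) ∧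
    (∀ ij ∈ Λ, 0 ≤ B ij * Beta ((ij.1 : ℝ) + δ' / 2) ((ij.2 : ℝ) + δ / 2) /
        Beta ((n : ℝ) + δ' / 2) ((q : ℝ) + δ / 2)) ∧
    (∑ ij ∈ Λ, B ij * Beta ((ij.1 : ℝ) + δ' / 2) ((ij.2 : ℝ) + δ / 2) /
        Beta ((n : ℝ) + δ' / 2) ((q : ℝ) + δ / 2) = 1) := by
  have hcnq := cc_pos hδ hδ' n q
  have hnn : ∀ ij ∈ Λ, 0 ≤ B ij * cc δ δ' ij.1 ij.2 / cc δ δ' n q := fun ij hij =>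
    div_nonneg (mul_nonneg (hB ij hij) (cc_pos hδ hδ' ij.1 ij.2).le) hcnq.le
  refine ⟨fun A hA hAs => part1_aux hδ hδ' p hp hrev n q Λ B hB hexp hA hAs, hnn, ?_⟩
  have h1 := part1_aux hδ hδ' p hp hrev n q Λ B hB hexp measurableSet_Ioo (subset_refl _)
  have hG : Measurable fun x : ℝ => ∫⁻ y in Set.Ioo (0:ℝ) 1, (p (x, y) : ℝ≥0∞) :=
    Measurable.lintegral_prod_right' (measurable_coe_nnreal_ennreal.comp hp)
  have hf : Measurable fun x : ℝ => ENNReal.ofReal (dd δ δ' n q x / cc δ δ' n q) :=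
    ((dd_meas δ δ' n q).div_const _).ennreal_ofReal
  have hL : ∫⁻ x, (∫⁻ y in Set.Ioo (0:ℝ) 1, (p (x, y) : ℝ≥0∞)) ∂(nu δ δ' n q) = 1 := by
    rw [nu_eq, lintegral_withDensity_eq_lintegral_mul _ hf hG]
    simp only [Pi.mul_apply]
    have hcong : ∀ x ∈ Set.Ioo (0:ℝ) 1,
        ENNReal.ofReal (dd δ δ' n q x / cc δ δ' n q)
            * ∫⁻ y in Set.Ioo (0:ℝ) 1, (p (x, y) : ℝ≥0∞)
          = ENNReal.ofReal (dd δ δ' n q x / cc δ δ' n q) := by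
      intro x hx
      rw [hmarg x hx, mul_one]
    rw [setLIntegral_congr_fun measurableSet_Ioo hcong]
    exact htot hδ hδ' n q
  rw [hL, Finset.sum_congr rfl
    (fun ij hij => by rw [nu_total hδ hδ' ij.1 ij.2, mul_one])] at h1
  have h3 : ENNReal.ofReal (∑ ij ∈ Λ, B ij * cc δ δ' ij.1 ij.2 / cc δ δ' n q) = 1 := by
    rw [ENNReal.ofReal_sum_of_nonneg hnn]
    exact h1.symm
  exact ENNReal.ofReal_eq_one.mp h3
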